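/- In the even shift, for every k ≥ 1 the pair (1, 0) belongs to E(0^{4k-1}) but does not belong to E(0^{2k-1} 1 0^{2k-1}); consequently the homoclinic points x = ...000... and y = ...00.100... (y has a single 1 at index 0 and 0 elsewhere) are not locally conjugate. -/
import Mathlib


/-- `w` occurs as a (contiguous) factor of the bi-infinite sequence `x`. -/
def IsFactor {A : Type*} (w : List A) (x : ℤ → A) : Prop :=
  ∃ k : ℤ, ∀ i : Fin w.length, x (k + (i : ℕ)) = w.get i

/-- The language of a shift space `X ⊆ A^ℤ`: all finite words occurring in elements of `X`. -/
def Lang {A : Type*} (X : Set (ℤ → A)) : Set (List A) :=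
  {w | ∃ x ∈ X, IsFactor w x}

/-- The context of a word `w` relative to a language `L`:
`E(w) = {(a,b) : a ++ w ++ b ∈ L}`. -/
def Ctx {A : Type*} (L : Set (List A)) (w : List A) : Set (List A × List A) :=
  {p | p.1 ++ w ++ p.2 ∈ L}

/-- `w` is a synchronizing word for the language `L`: whenever `u ++ w ∈ L` and
`w ++ v ∈ L`, also `u ++ w ++ v ∈ L`. -/
def SyncWord {A : Type*} (L : Set (List A)) (w : List A) : Prop :=
  ∀ u v : List A, u ++ w ∈ L → w ++ v ∈ L → u ++ w ++ v ∈ L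

/-- The even shift: binary bi-infinite sequences avoiding all words `1 0^{2k+1} 1`. -/
def evenShift : Set (ℤ → Fin 2) :=
  {x | ∀ k : ℕ, ¬ IsFactor ((1 : Fin 2) :: (List.replicate (2 * k + 1) 0 ++ [1])) x}

/-- The central window `x_{[-N,N]}` of a bi-infinite sequence, as a word of length `2N+1`. -/
def window {A : Type*} (x : ℤ → A) (N : ℕ) : List A :=
  (List.range (2 * N + 1)).map fun i => x ((i : ℤ) - (N : ℤ))

/-- Two points of a shift space are locally conjugate iff for some `N` they agree outside
`[-N,N]` and their central windows have equal contexts. -/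
def LocallyConjugate {A : Type*} (X : Set (ℤ → A)) (x y : ℤ → A) : Prop :=
  ∃ N : ℕ, (∀ n : ℤ, (N : ℤ) < |n| → x n = y n) ∧
    Ctx (Lang X) (window x N) = Ctx (Lang X) (window y N)


/-! ### Auxiliary lemmas -/

lemma flatMap_single {α β : Type*} (l : List α) (f : α → β) :
    l.flatMap (fun a => [f a]) = l.map f := by
  induction l with
  | nil => rfl
  | cons a l ih => simp [List.flatMap_cons, ih]

lemma window_eq {A : Type*} (x : ℤ → A) (N : ℕ) :
    window x N = (List.range (2 * N + 1)).map (fun i : ℕ => x ((i : ℤ) - (N : ℤ))) := by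
  unfold window
  have h : (do let a ← List.range (2 * N + 1); pure ((a : ℤ))) =
      (List.range (2 * N + 1)).map (fun a : ℕ => (a : ℤ)) := by
    show (List.range (2 * N + 1)).flatMap (fun a : ℕ => [(a : ℤ)]) = _
    exact flatMap_single _ _
  rw [h, List.map_map]
  rfl

/-- A prefix of a factor is a factor. -/
lemma isFactor_of_append {A : Type*} {u v : List A} {x : ℤ → A}
    (h : IsFactor (u ++ v) x) : IsFactor u x := by
  obtain ⟨k, hk⟩ := h
  refine ⟨k, fun i => ?_⟩
  have hi : (i : ℕ) < (u ++ v).length := by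
    simp only [List.length_append]
    exact lt_of_lt_of_le i.isLt (Nat.le_add_right _ _)
  have := hk ⟨i, hi⟩
  simpa [List.get_eq_getElem, List.getElem_append_left i.isLt] using this

/-- The "delta" point: a single `1` at the origin, is in the even shift. -/
lemma delta_mem_evenShift : (fun n => if n = 0 then (1 : Fin 2) else 0) ∈ evenShift := by
  intro k hf
  obtain ⟨j, hj⟩ := hf
  have hlen0 : 0 < ((1 : Fin 2) :: (List.replicate (2 * k + 1) 0 ++ [1])).length := by
    simp only [List.length_cons, List.length_append, List.length_replicate,
      List.length_singleton]
    omega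
  have hlen1 : 2 * k + 2 < ((1 : Fin 2) :: (List.replicate (2 * k + 1) 0 ++ [1])).length := by
    simp only [List.length_cons, List.length_append, List.length_replicate,
      List.length_singleton]
    omega
  have h0 := hj ⟨0, hlen0⟩
  have h1 := hj ⟨2 * k + 2, hlen1⟩
  have hget1 : ((1 : Fin 2) :: (List.replicate (2 * k + 1) 0 ++ [1]))[2 * k + 2]'hlen1
      = (1 : Fin 2) := by
    have e : ((1 : Fin 2) :: (List.replicate (2 * k + 1) 0 ++ [1]))
        = ((1 : Fin 2) :: List.replicate (2 * k + 1) 0) ++ [1] := by simp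
    rw [List.getElem_of_eq e, List.getElem_append_right (by simp)]
    simp
  simp only [List.get_eq_getElem, List.getElem_cons_zero, hget1] at h0 h1
  have e0 : j + (((0 : ℕ) : ℤ)) = 0 := by
    by_contra hne
    rw [if_neg hne] at h0
    exact absurd h0 (by decide)
  have e1 : j + (((2 * k + 2 : ℕ) : ℤ)) = 0 := by
    by_contra hne
    rw [if_neg hne] at h1
    exact absurd h1 (by decide)
  push_cast at e0 e1
  omega

/-- Every word `1 0^m` belongs to the language of the even shift. -/
lemma one_zeros_mem (m : ℕ) :
    ((1 : Fin 2) :: List.replicate m 0) ∈ Lang evenShift := by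
  refine ⟨_, delta_mem_evenShift, 0, fun i => ?_⟩
  rcases i with ⟨i, hi⟩
  cases i with
  | zero => simp
  | succ t =>
    have hne : ¬ ((0 : ℤ) + ((t + 1 : ℕ) : ℤ) = 0) := by push_cast; omega
    simp only [List.get_eq_getElem, List.getElem_cons_succ, List.getElem_replicate]
    rw [if_neg hne]

/-- A word starting `1 0^{2a+1} 1 …` is not in the language of the even shift. -/
lemma forbidden_word (a : ℕ) (r : List (Fin 2)) :
    ((1 : Fin 2) :: (List.replicate (2 * a + 1) 0 ++ 1 :: r)) ∉ Lang evenShift := by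
  rintro ⟨x, hx, hf⟩
  apply hx a
  have e : ((1 : Fin 2) :: (List.replicate (2 * a + 1) 0 ++ 1 :: r))
      = ((1 : Fin 2) :: (List.replicate (2 * a + 1) 0 ++ [1])) ++ r := by simp
  rw [e] at hf
  exact isFactor_of_append hf

lemma window_const (N : ℕ) :
    window (fun _ => (0 : Fin 2)) N = List.replicate (2 * N + 1) 0 := by
  rw [window_eq]
  simp

lemma window_delta (N : ℕ) :
    window (fun n => if n = 0 then (1 : Fin 2) else 0) N
      = List.replicate N 0 ++ 1 :: List.replicate N 0 := by
  rw [window_eq]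
  apply List.ext_getElem
  · simp
    omega
  · intro i h1 h2
    have hi : i < 2 * N + 1 := by simpa using h1
    simp only [List.getElem_map, List.getElem_range]
    rcases lt_trichotomy i N with h | h | h
    · rw [List.getElem_append_left (by simpa using h), List.getElem_replicate,
        if_neg (by omega)]
    · subst h
      rw [List.getElem_append_right (by simp), if_pos (by omega)]
      simp
    · rw [List.getElem_append_right (by simp; omega), List.getElem_cons,
        dif_neg (by simp; omega), List.getElem_replicate, if_neg (by omega)]

/-- In the even shift, `(1,0) ∈ E(0^{4k-1})` but `(1,0) ∉ E(0^{2k-1} 1 0^{2k-1})` for all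
`k ≥ 1`; consequently the homoclinic points `...000...` and `...00.100...` are not
locally conjugate. -/
theorem even_shift_homoclinic_not_lc :
    (∀ k : ℕ, 1 ≤ k →
      ([1], [0]) ∈ Ctx (Lang evenShift) (List.replicate (4 * k - 1) (0 : Fin 2)) ∧
      ([1], [0]) ∉ Ctx (Lang evenShift)
        (List.replicate (2 * k - 1) (0 : Fin 2) ++ [1] ++
          List.replicate (2 * k - 1) (0 : Fin 2))) ∧
    ¬ LocallyConjugate evenShift (fun _ => (0 : Fin 2))
      (fun n => if n = 0 then (1 : Fin 2) else 0) := by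
  constructor
  · intro k hk
    constructor
    · show ([1] : List (Fin 2)) ++ List.replicate (4 * k - 1) 0 ++ [0] ∈ Lang evenShift
      have h : ([1] : List (Fin 2)) ++ List.replicate (4 * k - 1) 0 ++ [0]
          = (1 : Fin 2) :: List.replicate (4 * k - 1 + 1) 0 := by
        rw [List.replicate_succ']
        simp
      rw [h]
      exact one_zeros_mem _
    · intro hmem
      have hmem' : ([1] : List (Fin 2)) ++
          (List.replicate (2 * k - 1) 0 ++ [1] ++ List.replicate (2 * k - 1) 0) ++ [0]
          ∈ Lang evenShift := hmem
      have h2 : 2 * k - 1 = 2 * (k - 1) + 1 := by omega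
      have e : ([1] : List (Fin 2)) ++
          (List.replicate (2 * k - 1) 0 ++ [1] ++ List.replicate (2 * k - 1) 0) ++ [0]
          = (1 : Fin 2) :: (List.replicate (2 * (k - 1) + 1) 0 ++
              1 :: (List.replicate (2 * k - 1) 0 ++ [0])) := by
        rw [h2]
        simp
      rw [e] at hmem'
      exact forbidden_word (k - 1) _ hmem'
  · rintro ⟨N, -, hctx⟩
    set r : ℕ := (N + 1) % 2 with hr
    have hmem : (((1 : Fin 2) :: List.replicate r 0, ([] : List (Fin 2)))) ∈
        Ctx (Lang evenShift) (window (fun _ => (0 : Fin 2)) N) := by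
      show ((1 : Fin 2) :: List.replicate r 0) ++ window (fun _ => (0 : Fin 2)) N ++ []
          ∈ Lang evenShift
      rw [window_const]
      have e : ((1 : Fin 2) :: List.replicate r 0) ++ List.replicate (2 * N + 1) 0
          ++ ([] : List (Fin 2)) = (1 : Fin 2) :: List.replicate (r + (2 * N + 1)) 0 := by
        simp only [List.replicate_add, List.append_nil, List.cons_append, List.append_assoc]
      rw [e]
      exact one_zeros_mem _
    rw [hctx] at hmem
    have hmem' : ((1 : Fin 2) :: List.replicate r 0) ++
        window (fun n => if n = 0 then (1 : Fin 2) else 0) N ++ [] ∈ Lang evenShift := hmem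
    rw [window_delta] at hmem'
    obtain ⟨a, ha⟩ : ∃ a, r + N = 2 * a + 1 := ⟨(r + N) / 2, by omega⟩
    have e : ((1 : Fin 2) :: List.replicate r 0) ++
        (List.replicate N 0 ++ 1 :: List.replicate N 0) ++ ([] : List (Fin 2))
        = (1 : Fin 2) :: (List.replicate (2 * a + 1) 0 ++ 1 :: List.replicate N 0) := by
      rw [← ha]
      simp only [List.replicate_add, List.append_nil, List.cons_append, List.append_assoc]
    rw [e] at hmem'
    exact forbidden_word a _ hmem'
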